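/- arXiv:2110.01782 — 2 statements merged into one kernel-verified Lean document; each statement's English description precedes it below -/
import Mathlib

section
/- For n ≥ 5, the normal closure in B'_n of the element σ_2σ_1^{-1} is all of B'_n. -/
/-- Relators of the Artin presentation of the braid group on `n` strands.
Generator `i : Fin (n-1)` corresponds to the Artin generator `σ_{i+1}`. -/
def braidRels (n : ℕ) : Set (FreeGroup (Fin (n - 1))) :=
  {r | (∃ i j : Fin (n - 1), (i : ℕ) + 1 = (j : ℕ) ∧
          r = .of i * .of j * .of i * (.of j * .of i * .of j)⁻¹) ∨
       (∃ i j : Fin (n - 1), (i : ℕ) + 2 ≤ (j : ℕ) ∧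
          r = .of i * .of j * (.of j * .of i)⁻¹)}

/-- The braid group on `n` strands. -/
def BraidGroup (n : ℕ) : Type := PresentedGroup (braidRels n)

instance (n : ℕ) : Group (BraidGroup n) := by unfold BraidGroup; infer_instance

/-- `sig n i` is the Artin generator `σ_i` (1-based: `1 ≤ i ≤ n-1`), and `1` otherwise. -/
def sig (n : ℕ) (i : ℕ) : BraidGroup n :=
  if h : 1 ≤ i ∧ i ≤ n - 1 then PresentedGroup.of ⟨i - 1, by omega⟩ else 1

/-- The exponent sum homomorphism `B_n → ℤ`, sending each Artin generator to `1`. -/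
def expSum (n : ℕ) : BraidGroup n →* Multiplicative ℤ :=
  PresentedGroup.toGroup (f := fun _ : Fin (n - 1) => Multiplicative.ofAdd (1 : ℤ))
    (by
      rintro r (⟨i, j, -, rfl⟩ | ⟨i, j, -, rfl⟩) <;>
        simp only [map_mul, map_inv, FreeGroup.lift_apply_of] <;> group)

/-- The Birman–Ko–Lee generator `ρ_{ij}`:
the half twist `(σ_{j-1} ⋯ σ_{i+1}) σ_i (σ_{j-1} ⋯ σ_{i+1})⁻¹`. -/
def rho (n i j : ℕ) : BraidGroup n :=
  (((List.range' (i + 1) (j - 1 - i)).reverse.map (sig n)).prod) * sig n i *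
    (((List.range' (i + 1) (j - 1 - i)).reverse.map (sig n)).prod)⁻¹

/-- The normal closure of `x` in the subgroup `H`. -/
def nclIn {G : Type*} [Group G] (H : Subgroup G) (x : G) : Subgroup G :=
  Subgroup.closure {y | ∃ g ∈ H, y = g * x * g⁻¹}

namespace BraidAux

lemma rel_one {n : ℕ} {r : FreeGroup (Fin (n-1))} (hr : r ∈ braidRels n) :
    (PresentedGroup.mk (braidRels n) r : BraidGroup n) = 1 :=
  (QuotientGroup.eq_one_iff r).2 (Subgroup.subset_normalClosure hr)

lemma sig_of {n : ℕ} (i : Fin (n-1)) : sig n ((i : ℕ) + 1) = PresentedGroup.of i := by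
  have h : 1 ≤ (i : ℕ) + 1 ∧ (i : ℕ) + 1 ≤ n - 1 := ⟨by omega, by omega⟩
  erw [sig, dif_pos h]
  congr 1

lemma braid_rel (n : ℕ) {i : ℕ} (h1 : 1 ≤ i) (h2 : i + 1 ≤ n - 1) :
    sig n i * sig n (i+1) * sig n i = sig n (i+1) * sig n i * sig n (i+1) := by
  have hi : 1 ≤ i ∧ i ≤ n - 1 := ⟨h1, by omega⟩
  have hj : 1 ≤ i + 1 ∧ i + 1 ≤ n - 1 := ⟨by omega, h2⟩
  erw [sig, sig, dif_pos hi, dif_pos hj]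
  set a : Fin (n-1) := ⟨i-1, by omega⟩ with ha
  set b : Fin (n-1) := ⟨i+1-1, by omega⟩ with hb
  have hr : (FreeGroup.of a * FreeGroup.of b * FreeGroup.of a *
      (FreeGroup.of b * FreeGroup.of a * FreeGroup.of b)⁻¹) ∈ braidRels n :=
    Or.inl ⟨a, b, by simp [ha, hb]; omega, rfl⟩
  have h := rel_one hr
  simp only [map_mul, map_inv] at h
  exact mul_inv_eq_one.mp h

lemma comm_rel (n : ℕ) {i j : ℕ} (h1 : 1 ≤ i) (h2 : i + 2 ≤ j) (h3 : j ≤ n - 1) :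
    Commute (sig n i) (sig n j) := by
  have hi : 1 ≤ i ∧ i ≤ n - 1 := ⟨h1, by omega⟩
  have hj : 1 ≤ j ∧ j ≤ n - 1 := ⟨by omega, h3⟩
  erw [Commute, SemiconjBy, sig, sig, dif_pos hi, dif_pos hj]
  set a : Fin (n-1) := ⟨i-1, by omega⟩ with ha
  set b : Fin (n-1) := ⟨j-1, by omega⟩ with hb
  have hr : (FreeGroup.of a * FreeGroup.of b *
      (FreeGroup.of b * FreeGroup.of a)⁻¹) ∈ braidRels n :=
    Or.inr ⟨a, b, by simp [ha, hb]; omega, rfl⟩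
  have h := rel_one hr
  simp only [map_mul, map_inv] at h
  exact mul_inv_eq_one.mp h

open scoped commutatorElement in
lemma succ_mul_inv_eq (n : ℕ) {i : ℕ} (h1 : 1 ≤ i) (h2 : i + 1 ≤ n - 1) :
    sig n (i+1) * (sig n i)⁻¹ = ⁅sig n i * sig n (i+1), sig n i⁆ := by
  rw [commutatorElement_def, braid_rel n h1 h2]
  group

lemma sig_succ_mul_inv_mem (n : ℕ) {i : ℕ} (h1 : 1 ≤ i) (h2 : i + 1 ≤ n - 1) :
    sig n (i+1) * (sig n i)⁻¹ ∈ commutator (BraidGroup n) := by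
  rw [succ_mul_inv_eq n h1 h2, commutator_def]
  exact Subgroup.commutator_mem_commutator (Subgroup.mem_top _) (Subgroup.mem_top _)

lemma sig_mul_sig_one_inv_mem (n : ℕ) {k : ℕ} (h1 : 1 ≤ k) (h2 : k ≤ n - 1) :
    sig n k * (sig n 1)⁻¹ ∈ commutator (BraidGroup n) := by
  revert h2
  induction k, h1 using Nat.le_induction with
  | base =>
    intro _
    rw [mul_inv_cancel]
    exact one_mem _
  | succ k hk ih =>
    intro h2
    have e : sig n (k+1) * (sig n 1)⁻¹ =
        (sig n (k+1) * (sig n k)⁻¹) * (sig n k * (sig n 1)⁻¹) := by group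
    rw [e]
    exact mul_mem (sig_succ_mul_inv_mem n hk h2) (ih (by omega))

end BraidAux

section Main

variable (n : ℕ)

local notation "GG" => BraidGroup n
local notation "CC" => commutator (BraidGroup n)

def xx : BraidGroup n := sig n 2 * (sig n 1)⁻¹

def NN : Subgroup (BraidGroup n) := nclIn (commutator (BraidGroup n)) (xx n)

namespace BraidAux

lemma hCnormal : (commutator (BraidGroup n)).Normal := Subgroup.commutator_normal ⊤ ⊤

lemma xC (h3 : 3 ≤ n) : xx n ∈ CC := by
  have := sig_succ_mul_inv_mem n (i := 1) le_rfl (by omega)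
  exact this

lemma xN : xx n ∈ NN n :=
  Subgroup.subset_closure ⟨1, one_mem _, by group⟩

lemma NleC (h3 : 3 ≤ n) : NN n ≤ CC := by
  rw [NN, nclIn]
  refine (Subgroup.closure_le _).2 ?_
  rintro y ⟨g, hg, rfl⟩
  exact mul_mem (mul_mem hg (xC n h3)) (inv_mem hg)

lemma conjC : ∀ g ∈ CC, ∀ h ∈ NN n, g * h * g⁻¹ ∈ NN n := by
  intro g hg h hh
  refine Subgroup.closure_induction (p := fun h _ => g * h * g⁻¹ ∈ NN n) ?_ ?_ ?_ ?_ hh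
  · rintro y ⟨k, hk, rfl⟩
    exact Subgroup.subset_closure ⟨g * k, mul_mem hg hk, by group⟩
  · simpa using (NN n).one_mem
  · intro p q _ _ hp hq
    have h' := mul_mem hp hq
    have e : (g * p * g⁻¹) * (g * q * g⁻¹) = g * (p * q) * g⁻¹ := by group
    rwa [e] at h'
  · intro p _ hp
    have h' := inv_mem hp
    have e : (g * p * g⁻¹)⁻¹ = g * p⁻¹ * g⁻¹ := by group
    rwa [e] at h'

lemma key1 (h5 : 5 ≤ n) : sig n 1 * xx n * (sig n 1)⁻¹ ∈ NN n := by
  have c14 : Commute (sig n 1) (sig n 4) := comm_rel n (by norm_num) (by norm_num) (by omega)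
  have c24 : Commute (sig n 2) (sig n 4) := comm_rel n (by norm_num) (by norm_num) (by omega)
  have cx4 : Commute (sig n 4) (xx n) := (c24.symm).mul_right (c14.symm).inv_right
  have hmem : sig n 1 * (sig n 4)⁻¹ ∈ CC := by
    have h' := inv_mem (sig_mul_sig_one_inv_mem n (k := 4) (by norm_num) (by omega))
    simpa using h'
  have hgen : (sig n 1 * (sig n 4)⁻¹) * xx n * (sig n 1 * (sig n 4)⁻¹)⁻¹ ∈ NN n :=
    Subgroup.subset_closure ⟨_, hmem, rfl⟩
  have h4 : (sig n 4)⁻¹ * xx n * sig n 4 = xx n := by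
    rw [cx4.inv_left.eq]
    group
  have e : (sig n 1 * (sig n 4)⁻¹) * xx n * (sig n 1 * (sig n 4)⁻¹)⁻¹ =
      sig n 1 * xx n * (sig n 1)⁻¹ := by
    calc (sig n 1 * (sig n 4)⁻¹) * xx n * (sig n 1 * (sig n 4)⁻¹)⁻¹
        = sig n 1 * ((sig n 4)⁻¹ * xx n * sig n 4) * (sig n 1)⁻¹ := by group
      _ = sig n 1 * xx n * (sig n 1)⁻¹ := by rw [h4]
  rwa [e] at hgen

lemma key2 (h5 : 5 ≤ n) : (sig n 1)⁻¹ * xx n * sig n 1 ∈ NN n := by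
  have c14 : Commute (sig n 1) (sig n 4) := comm_rel n (by norm_num) (by norm_num) (by omega)
  have c24 : Commute (sig n 2) (sig n 4) := comm_rel n (by norm_num) (by norm_num) (by omega)
  have cx4 : Commute (sig n 4) (xx n) := (c24.symm).mul_right (c14.symm).inv_right
  have hmem : (sig n 1)⁻¹ * sig n 4 ∈ CC := by
    have h0 := sig_mul_sig_one_inv_mem n (k := 4) (by norm_num) (by omega)
    have h1 := (hCnormal n).conj_mem _ h0 (sig n 1)⁻¹
    have e : (sig n 1)⁻¹ * (sig n 4 * (sig n 1)⁻¹) * ((sig n 1)⁻¹)⁻¹ =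
        (sig n 1)⁻¹ * sig n 4 := by group
    rwa [e] at h1
  have hgen : ((sig n 1)⁻¹ * sig n 4) * xx n * ((sig n 1)⁻¹ * sig n 4)⁻¹ ∈ NN n :=
    Subgroup.subset_closure ⟨_, hmem, rfl⟩
  have h4 : sig n 4 * xx n * (sig n 4)⁻¹ = xx n := by
    rw [cx4.eq]
    group
  have e : ((sig n 1)⁻¹ * sig n 4) * xx n * ((sig n 1)⁻¹ * sig n 4)⁻¹ =
      (sig n 1)⁻¹ * xx n * sig n 1 := by
    calc ((sig n 1)⁻¹ * sig n 4) * xx n * ((sig n 1)⁻¹ * sig n 4)⁻¹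
        = (sig n 1)⁻¹ * (sig n 4 * xx n * (sig n 4)⁻¹) * sig n 1 := by group
      _ = (sig n 1)⁻¹ * xx n * sig n 1 := by rw [h4]
  rwa [e] at hgen

lemma conjA (h5 : 5 ≤ n) : ∀ h ∈ NN n, sig n 1 * h * (sig n 1)⁻¹ ∈ NN n := by
  intro h hh
  refine Subgroup.closure_induction (p := fun h _ => sig n 1 * h * (sig n 1)⁻¹ ∈ NN n) ?_ ?_ ?_ ?_ hh
  · rintro y ⟨k, hk, rfl⟩
    have hk' : sig n 1 * k * (sig n 1)⁻¹ ∈ CC := (hCnormal n).conj_mem _ hk (sig n 1)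
    have h' := conjC n _ hk' _ (key1 n h5)
    have e : (sig n 1 * k * (sig n 1)⁻¹) * (sig n 1 * xx n * (sig n 1)⁻¹) *
        (sig n 1 * k * (sig n 1)⁻¹)⁻¹ = sig n 1 * (k * xx n * k⁻¹) * (sig n 1)⁻¹ := by group
    rwa [e] at h'
  · simpa using (NN n).one_mem
  · intro p q _ _ hp hq
    have h' := mul_mem hp hq
    have e : (sig n 1 * p * (sig n 1)⁻¹) * (sig n 1 * q * (sig n 1)⁻¹) =
        sig n 1 * (p * q) * (sig n 1)⁻¹ := by group
    rwa [e] at h'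
  · intro p _ hp
    have h' := inv_mem hp
    have e : (sig n 1 * p * (sig n 1)⁻¹)⁻¹ = sig n 1 * p⁻¹ * (sig n 1)⁻¹ := by group
    rwa [e] at h'

lemma conjAinv (h5 : 5 ≤ n) : ∀ h ∈ NN n, (sig n 1)⁻¹ * h * sig n 1 ∈ NN n := by
  intro h hh
  refine Subgroup.closure_induction (p := fun h _ => (sig n 1)⁻¹ * h * sig n 1 ∈ NN n) ?_ ?_ ?_ ?_ hh
  · rintro y ⟨k, hk, rfl⟩
    have hk' : (sig n 1)⁻¹ * k * ((sig n 1)⁻¹)⁻¹ ∈ CC := (hCnormal n).conj_mem _ hk (sig n 1)⁻¹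
    have h' := conjC n _ hk' _ (key2 n h5)
    have e : ((sig n 1)⁻¹ * k * ((sig n 1)⁻¹)⁻¹) * ((sig n 1)⁻¹ * xx n * sig n 1) *
        ((sig n 1)⁻¹ * k * ((sig n 1)⁻¹)⁻¹)⁻¹ = (sig n 1)⁻¹ * (k * xx n * k⁻¹) * sig n 1 := by
      group
    rwa [e] at h'
  · simpa using (NN n).one_mem
  · intro p q _ _ hp hq
    have h' := mul_mem hp hq
    have e : ((sig n 1)⁻¹ * p * sig n 1) * ((sig n 1)⁻¹ * q * sig n 1) =
        (sig n 1)⁻¹ * (p * q) * sig n 1 := by group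
    rwa [e] at h'
  · intro p _ hp
    have h' := inv_mem hp
    have e : ((sig n 1)⁻¹ * p * sig n 1)⁻¹ = (sig n 1)⁻¹ * p⁻¹ * sig n 1 := by group
    rwa [e] at h'

lemma mem_norm {g : BraidGroup n} (h1 : ∀ h ∈ NN n, g * h * g⁻¹ ∈ NN n)
    (h2 : ∀ h ∈ NN n, g⁻¹ * h * g ∈ NN n) : g ∈ Subgroup.normalizer (NN n : Set (BraidGroup n)) := by
  rw [Subgroup.mem_normalizer_iff]
  intro h
  constructor
  · exact h1 h
  · intro hh
    have h' := h2 _ hh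
    have e : g⁻¹ * (g * h * g⁻¹) * g = h := by group
    rwa [e] at h'

lemma NNnormal (h5 : 5 ≤ n) : (NN n).Normal := by
  rw [← Subgroup.normalizer_eq_top_iff, eq_top_iff]
  intro g _
  refine PresentedGroup.generated_by (braidRels n) (Subgroup.normalizer (NN n : Set (BraidGroup n))) ?_ g
  intro j
  rw [← sig_of j]
  have e : sig n ((j:ℕ)+1) = (sig n ((j:ℕ)+1) * (sig n 1)⁻¹) * sig n 1 := by group
  rw [e]
  have hCnorm : sig n ((j:ℕ)+1) * (sig n 1)⁻¹ ∈ Subgroup.normalizer (NN n : Set (BraidGroup n)) := by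
    have hc := sig_mul_sig_one_inv_mem n (k := (j:ℕ)+1) (by omega) (by have := j.2; omega)
    refine mem_norm n (conjC n _ hc) ?_
    intro h hh
    have h' := conjC n _ (inv_mem hc) h hh
    rwa [inv_inv] at h'
  have hAnorm : sig n 1 ∈ Subgroup.normalizer (NN n : Set (BraidGroup n)) := by
    refine mem_norm n (conjA n h5) ?_
    exact conjAinv n h5
  exact mul_mem hCnorm hAnorm

end BraidAux

end Main

namespace BraidAux

lemma braid_generated {n : ℕ} (H : Subgroup (BraidGroup n))
    (h : ∀ j : Fin (n-1), sig n ((j:ℕ)+1) ∈ H) (g : BraidGroup n) : g ∈ H := by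
  refine PresentedGroup.generated_by (braidRels n) ?_ ?_ g
  intro j
  have hj := h j
  rwa [sig_of] at hj

def ppi (n : ℕ) : BraidGroup n →* BraidGroup n ⧸ Subgroup.normalClosure {xx n} :=
  QuotientGroup.mk' (Subgroup.normalClosure {xx n})

open scoped commutatorElement in
lemma CleK (n : ℕ) (h5 : 5 ≤ n) :
    commutator (BraidGroup n) ≤ Subgroup.normalClosure {xx n} := by
  have hπ1 : ∀ g ∈ Subgroup.normalClosure {xx n}, ppi n g = 1 :=
    fun g hg => (QuotientGroup.eq_one_iff g).2 hg
  have hsig : ∀ k : ℕ, 1 ≤ k → k ≤ n - 1 → ppi n (sig n k) = ppi n (sig n 1) := by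
    intro k hk1
    induction k, hk1 using Nat.le_induction with
    | base => intro _; rfl
    | succ k hk ih =>
      intro hk2
      rcases eq_or_lt_of_le hk with h1 | h2
      · subst h1
        have hx1 := hπ1 (xx n) (Subgroup.subset_normalClosure rfl)
        have hx2 : ppi n (sig n 2 * (sig n 1)⁻¹) = 1 := hx1
        rw [map_mul, map_inv] at hx2
        have hx1 := hx2
        exact mul_inv_eq_one.mp hx1
      · have hkk : 2 ≤ k := h2
        have hbr := braid_rel n (i := k) (by omega) (by omega)
        have hcm : Commute (sig n 1) (sig n (k+1)) := comm_rel n (by norm_num) (by omega) (by omega)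
        have hu : ppi n (sig n k) = ppi n (sig n 1) := ih (by omega)
        have h3 := congrArg (ppi n) hbr
        simp only [map_mul] at h3
        rw [hu] at h3
        have hcm' : ppi n (sig n 1) * ppi n (sig n (k+1)) = ppi n (sig n (k+1)) * ppi n (sig n 1) := by
          rw [← map_mul, ← map_mul, hcm.eq]
        rw [hcm'] at h3
        exact (mul_left_cancel h3).symm
  have hzp : ∀ g : BraidGroup n, ppi n g ∈ Subgroup.zpowers (ppi n (sig n 1)) := by
    intro g
    refine braid_generated ((Subgroup.zpowers (ppi n (sig n 1))).comap (ppi n)) ?_ g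
    intro j
    rw [Subgroup.mem_comap]
    rw [hsig ((j:ℕ)+1) (by omega) (by have := j.2; omega)]
    exact Subgroup.mem_zpowers _
  rw [commutator_def]
  refine Subgroup.commutator_le.2 ?_
  intro g _ h _
  have hg := hzp g
  have hh := hzp h
  rw [Subgroup.mem_zpowers_iff] at hg hh
  obtain ⟨a, ha⟩ := hg
  obtain ⟨b, hb⟩ := hh
  have hcomm : ppi n g * ppi n h = ppi n h * ppi n g := by
    rw [← ha, ← hb, ← zpow_add, ← zpow_add, add_comm]
  have hone : ppi n ⁅g, h⁆ = 1 := by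
    rw [map_commutatorElement]
    exact commutatorElement_eq_one_iff_mul_comm.mpr hcomm
  exact (QuotientGroup.eq_one_iff _).1 hone

end BraidAux


/-- For n ≥ 5, the normal closure in B'_n of σ₂σ₁⁻¹ is all of B'_n. -/
theorem normalClosure_sigma21_eq_commutator (n : ℕ) (hn : 5 ≤ n) :
    nclIn (commutator (BraidGroup n)) (sig n 2 * (sig n 1)⁻¹) =
      commutator (BraidGroup n) := by
  have hN : nclIn (commutator (BraidGroup n)) (sig n 2 * (sig n 1)⁻¹) = NN n := rfl
  rw [hN]
  refine le_antisymm (BraidAux.NleC n (by omega)) ?_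
  haveI := BraidAux.NNnormal n hn
  have hKleN : Subgroup.normalClosure {xx n} ≤ NN n := by
    refine Subgroup.normalClosure_le_normal ?_
    intro y hy
    rw [Set.mem_singleton_iff] at hy
    subst hy
    exact BraidAux.xN n
  exact le_trans (BraidAux.CleK n hn) hKleN
end

section
/- For n ≥ 5, the normal closure in B'_n of the element σ_3σ_1^{-1} is all of B'_n. -/
open scoped commutatorElement

lemma braid_mk_rel {n : ℕ} {r : FreeGroup (Fin (n-1))} (hr : r ∈ braidRels n) :
    (PresentedGroup.mk (braidRels n) r : BraidGroup n) = 1 :=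
  (QuotientGroup.eq_one_iff _).mpr (Subgroup.subset_normalClosure hr)

lemma sig_eq {n i : ℕ} (h1 : 1 ≤ i) (h2 : i ≤ n-1) :
    sig n i = PresentedGroup.mk (braidRels n) (FreeGroup.of ⟨i-1, by omega⟩) := by
  rw [sig]; exact dif_pos ⟨h1, h2⟩

lemma braid_rel {n i : ℕ} (h1 : 1 ≤ i) (h2 : i+1 ≤ n-1) :
    sig n i * sig n (i+1) * sig n i = sig n (i+1) * sig n i * sig n (i+1) := by
  rw [sig_eq h1 (by omega), sig_eq (by omega) h2]
  have hr : (FreeGroup.of (⟨i-1, by omega⟩ : Fin (n-1)) * FreeGroup.of (⟨i+1-1, by omega⟩ : Fin (n-1)) * FreeGroup.of (⟨i-1, by omega⟩ : Fin (n-1)) *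
      (FreeGroup.of (⟨i+1-1, by omega⟩ : Fin (n-1)) * FreeGroup.of (⟨i-1, by omega⟩ : Fin (n-1)) * FreeGroup.of (⟨i+1-1, by omega⟩ : Fin (n-1)))⁻¹) ∈ braidRels n :=
    Or.inl ⟨_, _, by simp; omega, rfl⟩
  have h := braid_mk_rel hr
  simp only [map_mul, map_inv] at h
  exact mul_inv_eq_one.mp h

lemma comm_rel {n i j : ℕ} (h1 : 1 ≤ i) (h : i+2 ≤ j) (h2 : j ≤ n-1) :
    sig n i * sig n j = sig n j * sig n i := by
  rw [sig_eq h1 (by omega), sig_eq (by omega) h2]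
  have hr : (FreeGroup.of (⟨i-1, by omega⟩ : Fin (n-1)) * FreeGroup.of (⟨j-1, by omega⟩ : Fin (n-1)) *
      (FreeGroup.of (⟨j-1, by omega⟩ : Fin (n-1)) * FreeGroup.of (⟨i-1, by omega⟩ : Fin (n-1)))⁻¹) ∈ braidRels n :=
    Or.inr ⟨_, _, by simp; omega, rfl⟩
  have h := braid_mk_rel hr
  simp only [map_mul, map_inv] at h
  exact mul_inv_eq_one.mp h

lemma expSum_sig {n i : ℕ} (h1 : 1 ≤ i) (h2 : i ≤ n-1) :
    expSum n (sig n i) = Multiplicative.ofAdd (1 : ℤ) := by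
  rw [sig_eq h1 h2]
  exact PresentedGroup.toGroup.of _

lemma sig_mul_inv_mem (n : ℕ) : ∀ i, 1 ≤ i → i ≤ n-1 →
    sig n i * (sig n 1)⁻¹ ∈ commutator (BraidGroup n) := by
  intro i
  induction i with
  | zero => omega
  | succ k ih =>
    intro h1 h2
    rcases Nat.eq_or_lt_of_le h1 with he | hlt
    · rw [← he]; simpa using one_mem _
    · have hk1 : 1 ≤ k := by omega
      have hk2 : k + 1 ≤ n - 1 := h2
      set w := sig n k * sig n (k+1) with hw
      have hconj : sig n (k+1) = w * sig n k * w⁻¹ := by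
        have hb := braid_rel hk1 hk2
        conv_rhs => rw [hw, mul_inv_rev, ← mul_assoc, hb]
        group
      have key : sig n (k+1) * (sig n 1)⁻¹ =
          (w * (sig n k * (sig n 1)⁻¹) * w⁻¹) * ⁅w, sig n 1⁆ := by
        rw [commutatorElement_def, hconj]; group
      rw [key]
      exact mul_mem ((commutator (BraidGroup n)).normal_of_characteristic.conj_mem _
          (ih hk1 (by omega)) w)
        (Subgroup.commutator_mem_commutator (Subgroup.mem_top _) (Subgroup.mem_top _))

lemma decomp (n : ℕ) (g : BraidGroup n) (hn : 2 ≤ n) :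
    g * (sig n 1) ^ (- (expSum n g).toAdd) ∈ commutator (BraidGroup n) := by
  set C := commutator (BraidGroup n)
  set σ := sig n 1 with hσ
  let K : Subgroup (BraidGroup n) :=
    { carrier := {g | g * σ ^ (- (expSum n g).toAdd) ∈ C}
      one_mem' := by simpa using one_mem C
      mul_mem' := by
        intro a b ha hb
        simp only [Set.mem_setOf_eq, map_mul] at *
        have : a * b * σ ^ (-(expSum n a * expSum n b).toAdd) =
            (a * σ ^ (-(expSum n a).toAdd)) *
              (σ ^ ((expSum n a).toAdd) * (b * σ ^ (-(expSum n b).toAdd)) * (σ ^ ((expSum n a).toAdd))⁻¹) := by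
          simp only [toAdd_mul, neg_add, zpow_add]
          group
        rw [this]
        exact mul_mem ha (C.normal_of_characteristic.conj_mem _ hb _)
      inv_mem' := by
        intro a ha
        simp only [Set.mem_setOf_eq, map_inv] at *
        have : a⁻¹ * σ ^ (-(expSum n a)⁻¹.toAdd) =
            σ ^ (-(expSum n a).toAdd) * (a * σ ^ (-(expSum n a).toAdd))⁻¹ * (σ ^ (-(expSum n a).toAdd))⁻¹ := by
          simp only [toAdd_inv, neg_neg]; group
        rw [this]
        exact C.normal_of_characteristic.conj_mem _ (inv_mem ha) _ }
  have hK : ∀ j : Fin (n-1), PresentedGroup.of (rels := braidRels n) j ∈ K := by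
    intro j
    have hjs : PresentedGroup.of (rels := braidRels n) j = sig n (j+1) := by
      rw [sig_eq (by omega) (by omega)]
      rfl
    show _ ∈ {g | g * σ ^ (- (expSum n g).toAdd) ∈ C}
    simp only [Set.mem_setOf_eq, hjs]
    rw [expSum_sig (by omega) (by omega)]
    simpa using sig_mul_inv_mem n (j+1) (by omega) (by omega)
  exact PresentedGroup.generated_by (braidRels n) K hK g

/-- For n ≥ 5, the normal closure in B'_n of σ₃σ₁⁻¹ is all of B'_n. -/
theorem normalClosure_sigma31_eq_commutator (n : ℕ) (hn : 5 ≤ n) :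
    nclIn (commutator (BraidGroup n)) (sig n 3 * (sig n 1)⁻¹) =
      commutator (BraidGroup n) := by
  set C := commutator (BraidGroup n) with hC
  set x := sig n 3 * (sig n 1)⁻¹ with hx
  set S := {y | ∃ g ∈ C, y = g * x * g⁻¹} with hS
  have hd := decomp n
  -- x is in the commutator subgroup
  have hxC : x ∈ C := by
    have h := hd x (by omega)
    have he : expSum n x = 1 := by
      rw [hx, map_mul, map_inv, expSum_sig (by omega) (by omega),
        expSum_sig (by omega) (by omega)]
      group
    rw [he] at h
    simpa using h
  have hxS : x ∈ S := ⟨1, one_mem C, by group⟩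
  have hSsub : S ⊆ (C : Set (BraidGroup n)) := by
    rintro y ⟨g, hg, rfl⟩
    exact mul_mem (mul_mem hg hxC) (inv_mem hg)
  have hNleC : nclIn C x ≤ C := (Subgroup.closure_le _).mpr hSsub
  -- σ₁ commutes with x
  have hcomm : Commute (sig n 1) x := by
    have h13 : Commute (sig n 1) (sig n 3) := comm_rel (by omega) (by omega) (by omega)
    exact h13.mul_right (Commute.refl _).inv_right
  -- the generating set S is invariant under all conjugations
  have hconjS : ∀ (g : BraidGroup n), ∀ s ∈ S, g * s * g⁻¹ ∈ S := by
    rintro g s ⟨h, hh, rfl⟩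
    set k := (expSum n g).toAdd with hk
    have hg0 : g * (sig n 1) ^ (-k) ∈ C := hd g (by omega)
    refine ⟨(g * (sig n 1) ^ (-k)) * ((sig n 1) ^ k * h * ((sig n 1) ^ k)⁻¹),
      mul_mem hg0 (C.normal_of_characteristic.conj_mem _ hh _), ?_⟩
    have hg' : (g * (sig n 1) ^ (-k)) * ((sig n 1) ^ k * h * ((sig n 1) ^ k)⁻¹) =
        g * h * (sig n 1) ^ (-k) := by group
    rw [hg']
    have hxk : (sig n 1) ^ (-k) * x * ((sig n 1) ^ (-k))⁻¹ = x := by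
      rw [(hcomm.zpow_left (-k)).eq]; group
    have hexp : (g * h * (sig n 1) ^ (-k)) * x * (g * h * (sig n 1) ^ (-k))⁻¹ =
        g * h * ((sig n 1) ^ (-k) * x * ((sig n 1) ^ (-k))⁻¹) * h⁻¹ * g⁻¹ := by group
    rw [hexp, hxk]
    group
  -- N is normal in the whole braid group
  haveI hNnormal : (nclIn C x).Normal := by
    constructor
    intro m hm g
    refine Subgroup.closure_induction (k := S)
      (p := fun m _ => g * m * g⁻¹ ∈ Subgroup.closure S) ?_ ?_ ?_ ?_ hm
    · intro s hs
      exact Subgroup.subset_closure (hconjS g s hs)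
    · simpa using one_mem _
    · intro a b _ _ ha hb
      have h2 : g * (a * b) * g⁻¹ = (g * a * g⁻¹) * (g * b * g⁻¹) := by group
      rw [h2]; exact mul_mem ha hb
    · intro a _ ha
      have h2 : g * a⁻¹ * g⁻¹ = (g * a * g⁻¹)⁻¹ := by group
      rw [h2]; exact inv_mem ha
  set N := nclIn C x with hN
  set q := QuotientGroup.mk' N with hq
  -- relations in the quotient
  have hmapb : ∀ i : ℕ, 1 ≤ i → i + 1 ≤ n - 1 →
      q (sig n i) * q (sig n (i+1)) * q (sig n i) =
        q (sig n (i+1)) * q (sig n i) * q (sig n (i+1)) := by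
    intro i h1 h2
    have := congrArg q (braid_rel h1 h2)
    simpa only [map_mul] using this
  have hmapc : ∀ i j : ℕ, 1 ≤ i → i + 2 ≤ j → j ≤ n - 1 →
      q (sig n i) * q (sig n j) = q (sig n j) * q (sig n i) := by
    intro i j h1 h h2
    have := congrArg q (comm_rel h1 h h2)
    simpa only [map_mul] using this
  have L : ∀ b c : BraidGroup n ⧸ N, b * c * b = c * b * c → b * c = c * b → b = c := by
    intro b c h1 h2
    rw [h2] at h1
    exact mul_left_cancel (mul_left_cancel ((mul_assoc c b b).symm.trans
      (h1.trans (mul_assoc c b c))))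
  have h31 : q (sig n 3) = q (sig n 1) := by
    have hxN : x ∈ N := Subgroup.subset_closure hxS
    have : q x = 1 := (QuotientGroup.eq_one_iff _).mpr hxN
    rw [hx, map_mul, map_inv, mul_inv_eq_one] at this
    exact this
  have h34 : q (sig n 3) = q (sig n 4) := by
    refine L _ _ (hmapb 3 (by omega) (by omega)) ?_
    rw [h31]
    exact hmapc 1 4 (by omega) (by omega) (by omega)
  have h23 : q (sig n 2) = q (sig n 3) := by
    refine L _ _ (hmapb 2 (by omega) (by omega)) ?_
    rw [h34]
    exact hmapc 2 4 (by omega) (by omega) (by omega)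
  have h21 : q (sig n 2) = q (sig n 1) := h23.trans h31
  -- all generators are equal in the quotient
  have key2 : ∀ i, 1 ≤ i → i ≤ n - 1 → q (sig n i) = q (sig n 1) := by
    intro i
    induction i using Nat.strong_induction_on with
    | _ i ih =>
      match i with
      | 0 => intro h; omega
      | 1 => intro _ _; rfl
      | 2 => intro _ _; exact h21
      | 3 => intro _ _; exact h31
      | (m+4) =>
        intro _ hle
        have e1 : q (sig n (m+2)) = q (sig n 1) := ih (m+2) (by omega) (by omega) (by omega)
        have e2 : q (sig n (m+3)) = q (sig n 1) := ih (m+3) (by omega) (by omega) (by omega)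
        have hb : q (sig n (m+3)) * q (sig n (m+4)) * q (sig n (m+3)) =
            q (sig n (m+4)) * q (sig n (m+3)) * q (sig n (m+4)) := by
          have := hmapb (m+3) (by omega) (by omega)
          simpa using this
        have hc : q (sig n (m+3)) * q (sig n (m+4)) = q (sig n (m+4)) * q (sig n (m+3)) := by
          rw [e2, ← e1]
          exact hmapc (m+2) (m+4) (by omega) (by omega) (by omega)
        exact (L _ _ hb hc).symm.trans e2
  -- the quotient is cyclic, hence abelian
  have hcyc : ∀ y : BraidGroup n ⧸ N, y ∈ Subgroup.zpowers (q (sig n 1)) := by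
    intro y
    obtain ⟨g, rfl⟩ := QuotientGroup.mk'_surjective N y
    refine PresentedGroup.generated_by (braidRels n)
      ((Subgroup.zpowers (q (sig n 1))).comap q) ?_ g
    intro j
    have hjs : PresentedGroup.of (rels := braidRels n) j = sig n ((j : ℕ) + 1) := by
      rw [sig_eq (by omega) (by omega)]
      rfl
    show q (PresentedGroup.of j) ∈ Subgroup.zpowers (q (sig n 1))
    rw [hjs, key2 ((j : ℕ) + 1) (by omega) (by omega)]
    exact Subgroup.mem_zpowers _
  have hcommQ : ∀ y z : BraidGroup n ⧸ N, y * z = z * y := by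
    intro y z
    obtain ⟨k, hk⟩ := Subgroup.mem_zpowers_iff.mp (hcyc y)
    obtain ⟨l, hl⟩ := Subgroup.mem_zpowers_iff.mp (hcyc z)
    rw [← hk, ← hl, ← zpow_add, ← zpow_add, add_comm]
  have hCleN : C ≤ N := by
    rw [hC, commutator_def, Subgroup.commutator_le]
    intro g _ h _
    refine (QuotientGroup.eq_one_iff _).mp ?_
    show q ⁅g, h⁆ = 1
    rw [map_commutatorElement]
    exact commutatorElement_eq_one_iff_mul_comm.mpr (hcommQ _ _)
  exact le_antisymm hNleC hCleN
end
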